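/- Let κ be regular uncountable and not a strong limit. Let θ be the least ν such that some λ satisfies ν ≤ λ < κ ≤ λ^ν, let λ be the least such witness for θ, and put μ = λ^{<θ}. Then μ^{<θ} = μ, μ < κ, and μ^θ ≥ κ. -/

import Mathlib

open Cardinal Set

private lemma card_lsub_le_sum {ι : Type u} (f : ι → Ordinal.{u}) :
    (Ordinal.lsub f).card ≤ Cardinal.sum fun i => (f i).card + 1 := by
  have h : Ordinal.lsub f = ⨆ i, Order.succ (f i) := rfl
  rw [h]
  refine (Ordinal.card_iSup_le_sum_card _).trans ?_
  simp [Ordinal.card_succ]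

private lemma add_one_lt_of_lt {a θ : Cardinal} (hθ : ℵ₀ ≤ θ) (h : a < θ) : a + 1 < θ := by
  rcases lt_or_ge a ℵ₀ with h'|h'
  · exact lt_of_lt_of_le (Cardinal.add_lt_aleph0 h' Cardinal.one_lt_aleph0) hθ
  · rwa [Cardinal.add_one_of_aleph0_le h']

private lemma add_one_le_of_le {a b : Cardinal} (hb : ℵ₀ ≤ b) (h : a ≤ b) : a + 1 ≤ b := by
  calc a + 1 ≤ b + 1 := add_le_add_left h 1
  _ = b := Cardinal.add_one_of_aleph0_le hb

/-- powerlt is below κ if each power is. -/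
private lemma powerlt_lt_of_isRegular {l θ κ : Cardinal.{u}} (hreg : κ.IsRegular) (hθκ : θ < κ)
    (h : ∀ α < θ, l ^ α < κ) : l ^< θ < κ := by
  letI : IsWellOrder θ.ord.ToType (· < ·) := isWellOrder_lt
  have hle : l ^< θ ≤ ⨆ i : θ.ord.ToType, l ^ (Ordinal.typein (· < ·) i).card := by
    rw [Cardinal.powerlt_le]
    intro x hx
    have hx' : x.ord < Ordinal.type ((· < ·) : θ.ord.ToType → θ.ord.ToType → Prop) := by
      rw [Ordinal.type_toType]; exact Cardinal.ord_lt_ord.2 hx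
    obtain ⟨i, hi⟩ := Ordinal.typein_surj _ hx'
    have : l ^ x = l ^ (Ordinal.typein (· < ·) i).card := by rw [hi, Cardinal.card_ord]
    rw [this]
    exact le_ciSup (Cardinal.bddAbove_range _) i
  refine hle.trans_lt (Cardinal.iSup_lt_of_isRegular hreg ?_ fun i => h _ ?_)
  · rwa [Cardinal.mk_toType, Cardinal.card_ord]
  · refine Cardinal.lt_ord.1 ?_
    have h1 := Ordinal.typein_lt_type ((· < ·) : θ.ord.ToType → θ.ord.ToType → Prop) i
    rwa [Ordinal.type_toType] at h1

/-- If every cardinal below μ raised to α stays ≤ μ, and α < cof μ, then μ ^ α ≤ μ. -/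
private lemma pow_le_of_lt_cof {μ α : Cardinal.{u}} (hμ : ℵ₀ ≤ μ) (hα : α < μ.ord.cof)
    (h : ∀ d < μ, d ^ α ≤ μ) : μ ^ α ≤ μ := by
  set M := μ.ord.ToType with hMdef
  letI : IsWellOrder M (· < ·) := isWellOrder_lt
  have hM : #M = μ := by rw [hMdef, Cardinal.mk_toType, Cardinal.card_ord]
  have hpow : μ ^ α = #(α.out → M) := by
    have := Cardinal.power_def M α.out
    rwa [hM, Cardinal.mk_out] at this
  have key : ∀ f : α.out → M, ∃ x : M, ∀ a, f a < x := by
    intro f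
    have hb : Bounded (· < ·) (Set.range f) := by
      by_contra hnb
      have hcf : IsCofinal (Set.range f) := by
        intro x
        by_contra hx
        push_neg at hx
        exact hnb ⟨x, hx⟩
      have h1 := Ordinal.lt_cof_type hcf
      have h2 : Order.cof M = μ.ord.cof := Ordinal.cof_toType _
      rw [h2] at h1
      exact lt_irrefl _ (h1.trans_lt ((Cardinal.mk_range_le).trans_lt (by rwa [Cardinal.mk_out])))
    obtain ⟨x, hx⟩ := hb
    exact ⟨x, fun a => hx _ (Set.mem_range_self a)⟩
  have hinj : μ ^ α ≤ Cardinal.sum fun x : M => #(Iio x) ^ α := by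
    rw [hpow]
    have : #(α.out → M) ≤ #(Σ x : M, (α.out → Iio x)) := by
      refine Cardinal.mk_le_of_injective (f := fun f =>
        ⟨(key f).choose, fun a => ⟨f a, (key f).choose_spec a⟩⟩) ?_
      intro f g hfg
      funext a
      exact congrArg (fun p : Σ x : M, (α.out → Iio x) => ((p.2 a : Iio p.1) : M)) hfg
    refine this.trans ?_
    rw [Cardinal.mk_sigma]
    refine Cardinal.sum_le_sum _ _ fun x => le_of_eq ?_
    have := Cardinal.power_def (Iio x) α.out
    rw [Cardinal.mk_out] at this
    exact this.symm
  refine hinj.trans ?_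
  calc (Cardinal.sum fun x : M => #(Iio x) ^ α)
      ≤ Cardinal.sum fun _ : M => μ :=
        Cardinal.sum_le_sum _ _ fun x => h _ (Cardinal.mk_Iio_ord_toType x)
    _ = #M * μ := Cardinal.sum_const' M μ
    _ = μ := by rw [hM, Cardinal.mul_eq_self hμ]

theorem stmt_8 (κ θ l μ : Cardinal)
    (hreg : κ.IsRegular) (hunc : Cardinal.aleph0 < κ) (hnsl : ¬ κ.IsStrongLimit)
    (hθ : θ = sInf {ν : Cardinal | ∃ l' : Cardinal, ν ≤ l' ∧ l' < κ ∧ κ ≤ l' ^ ν})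
    (hl : l = sInf {l' : Cardinal | θ ≤ l' ∧ l' < κ ∧ κ ≤ l' ^ θ})
    (hμ : μ = l ^< θ) :
    μ ^< θ = μ ∧ μ < κ ∧ κ ≤ μ ^ θ := by
  obtain ⟨x, hxκ, hx2⟩ : ∃ x, x < κ ∧ κ ≤ 2 ^ x := by
    by_contra h
    push_neg at h
    exact hnsl ⟨(Cardinal.aleph0_pos.trans hunc).ne', h⟩
  have h2κ : (2 : Cardinal) < κ := (Cardinal.nat_lt_aleph0 2).trans hunc
  have hSne : {ν : Cardinal | ∃ l' : Cardinal, ν ≤ l' ∧ l' < κ ∧ κ ≤ l' ^ ν}.Nonempty :=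
    ⟨x, max x 2, le_max_left _ _, max_lt hxκ h2κ,
      hx2.trans (Cardinal.power_le_power_right (le_max_right _ _))⟩
  have hθS : ∃ l' : Cardinal, θ ≤ l' ∧ l' < κ ∧ κ ≤ l' ^ θ := by
    rw [hθ]; exact csInf_mem hSne
  obtain ⟨l0, hθl0, hl0κ, hκl0⟩ := hθS
  have hlT : θ ≤ l ∧ l < κ ∧ κ ≤ l ^ θ := by
    rw [hl]; exact csInf_mem (s := {l' : Cardinal | θ ≤ l' ∧ l' < κ ∧ κ ≤ l' ^ θ}) ⟨l0, hθl0, hl0κ, hκl0⟩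
  obtain ⟨hθl, hlκ, hκl⟩ := hlT
  -- θ is infinite
  have hθinf : ℵ₀ ≤ θ := by
    rw [hθ]
    refine le_csInf hSne ?_
    rintro ν ⟨l', hν, hl', hκ'⟩
    by_contra hfin
    push_neg at hfin
    obtain ⟨n, rfl⟩ := Cardinal.lt_aleph0.1 hfin
    rcases lt_or_ge l' ℵ₀ with h'|h'
    · exact absurd (hκ'.trans_lt (Cardinal.power_lt_aleph0 h' (Cardinal.nat_lt_aleph0 n))) hunc.not_gt
    · rcases Nat.eq_zero_or_pos n with rfl|hn
      · rw [Nat.cast_zero, Cardinal.power_zero] at hκ'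
        exact (hκ'.trans_lt Cardinal.one_lt_aleph0).not_gt hunc
      · rw [Cardinal.power_natCast, Cardinal.power_nat_eq h' hn] at hκ'
        exact absurd (hκ'.trans_lt hl') (lt_irrefl κ)
  have hlinf : ℵ₀ ≤ l := hθinf.trans hθl
  have hl0 : l ≠ 0 := (Cardinal.aleph0_pos.trans_le hlinf).ne'
  have h1θ : (1 : Cardinal) < θ := Cardinal.one_lt_aleph0.trans_le hθinf
  have hlμ : l ≤ μ := by
    rw [hμ]
    simpa [Cardinal.power_one] using Cardinal.le_powerlt l h1θ
  have hθμ : θ ≤ μ := hθl.trans hlμ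
  have hμinf : ℵ₀ ≤ μ := hθinf.trans hθμ
  -- key: all powers below θ stay below κ
  have hkey : ∀ α < θ, l ^ α < κ := by
    intro α hα
    by_contra h
    push_neg at h
    have hθα : θ ≤ α := by
      conv_lhs => rw [hθ]
      exact csInf_le' ⟨l, hα.le.trans hθl, hlκ, h⟩
    exact absurd hα hθα.not_gt
  have hμκ : μ < κ := hμ ▸ powerlt_lt_of_isRegular hreg (hθl.trans_lt hlκ) hkey
  have hκμθ : κ ≤ μ ^ θ := hκl.trans (Cardinal.power_le_power_right hlμ)
  -- d < μ implies d ≤ l ^ β for some β < θ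
  have hbelow : ∀ d < μ, ∃ β < θ, d ≤ l ^ β := by
    intro d hd
    by_contra h
    push_neg at h
    have : μ ≤ d := by
      rw [hμ, Cardinal.powerlt_le]
      exact fun b hb => (h b hb).le
    exact absurd (this.trans_lt hd) (lt_irrefl μ)
  -- θ is regular
  have hθreg : θ.IsRegular := by
    refine ⟨hθinf, ?_⟩
    by_contra hc
    push_neg at hc
    obtain ⟨ι, f, hlsub, hmk⟩ := Ordinal.exists_lsub_cof θ.ord
    have hsum : θ ≤ Cardinal.sum fun i => (f i).card + 1 := by
      have := card_lsub_le_sum f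
      rwa [hlsub, Cardinal.card_ord] at this
    have hterm : ∀ i, l ^ ((f i).card + 1) ≤ μ := by
      intro i
      have h1 : (f i).card < θ := Cardinal.lt_ord.1 (hlsub ▸ Ordinal.lt_lsub f i)
      exact hμ ▸ Cardinal.le_powerlt l (_root_.add_one_lt_of_lt hθinf h1)
    have hpow : κ ≤ μ ^ θ.ord.cof := by
      calc κ ≤ l ^ θ := hκl
        _ ≤ l ^ Cardinal.sum fun i => (f i).card + 1 :=
          Cardinal.power_le_power_left hl0 hsum
        _ = Cardinal.prod fun i => l ^ ((f i).card + 1) := Cardinal.power_sum l _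
        _ ≤ Cardinal.prod fun _ : ι => μ := Cardinal.prod_le_prod _ _ hterm
        _ = μ ^ #ι := Cardinal.prod_const' ι μ
        _ = μ ^ θ.ord.cof := by rw [hmk]
    have hθc : θ ≤ θ.ord.cof := by
      conv_lhs => rw [hθ]
      exact csInf_le' ⟨μ, hc.le.trans hθμ, hμκ, hpow⟩
    exact absurd hc hθc.not_gt
  -- main conjunct
  have hmain : μ ^< θ = μ := by
    refine le_antisymm (Cardinal.powerlt_le.2 fun α hα => ?_)
      (by simpa [Cardinal.power_one] using Cardinal.le_powerlt μ h1θ)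
    by_cases hB : ∃ β < θ, μ ≤ l ^ β
    · obtain ⟨β, hβ, hle⟩ := hB
      calc μ ^ α ≤ (l ^ β) ^ α := Cardinal.power_le_power_right hle
        _ = l ^ (β * α) := (Cardinal.power_mul).symm
        _ ≤ μ := hμ ▸ Cardinal.le_powerlt l (Cardinal.mul_lt_of_lt hθinf hβ hα)
    · push_neg at hB
      have hcof : θ ≤ μ.ord.cof := by
        by_contra hc
        push_neg at hc
        obtain ⟨ι, f, hlsub, hmk⟩ := Ordinal.exists_lsub_cof μ.ord
        have hcard : ∀ i, (f i).card < μ := fun i =>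
          Cardinal.lt_ord.1 (hlsub ▸ Ordinal.lt_lsub f i)
        choose β hβθ hβle using fun i => hbelow _ (hcard i)
        have hιθ : #ι < θ := hmk ▸ hc
        have hsupβ : (⨆ i, β i) < θ := Cardinal.iSup_lt_of_isRegular hθreg hιθ hβθ
        set β' := max (⨆ i, β i) 1 with hβ'def
        have hβ'θ : β' < θ := max_lt hsupβ h1θ
        have hlβ'inf : ℵ₀ ≤ l ^ β' := by
          refine hlinf.trans ?_
          conv_lhs => rw [← Cardinal.power_one l]
          exact Cardinal.power_le_power_left hl0 (le_max_right _ _)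
        have hterm : ∀ i, (f i).card + 1 ≤ l ^ β' := by
          intro i
          refine add_one_le_of_le hlβ'inf ?_
          refine (hβle i).trans (Cardinal.power_le_power_left hl0 ?_)
          exact (le_ciSup (Cardinal.bddAbove_range β) i).trans (le_max_left _ _)
        have hμle : μ ≤ l ^ β' := by
          have h1 : μ ≤ Cardinal.sum fun i => (f i).card + 1 := by
            have := card_lsub_le_sum f
            rwa [hlsub, Cardinal.card_ord] at this
          calc μ ≤ Cardinal.sum fun i => (f i).card + 1 := h1
            _ ≤ Cardinal.sum fun _ : ι => l ^ β' := Cardinal.sum_le_sum _ _ hterm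
            _ = #ι * l ^ β' := Cardinal.sum_const' ι _
            _ ≤ (l ^ β') * (l ^ β') := by
              refine mul_le_mul' ?_ le_rfl
              rw [hmk]
              refine hc.le.trans (hθl.trans ?_)
              conv_lhs => rw [← Cardinal.power_one l]
              exact Cardinal.power_le_power_left hl0 (le_max_right _ _)
            _ = l ^ β' := Cardinal.mul_eq_self hlβ'inf
        exact absurd hμle (hB β' hβ'θ).not_ge
      refine pow_le_of_lt_cof hμinf (hα.trans_le hcof) ?_
      intro d hd
      obtain ⟨β, hβθ, hdβ⟩ := hbelow d hd
      calc d ^ α ≤ (l ^ β) ^ α := Cardinal.power_le_power_right hdβ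
        _ = l ^ (β * α) := (Cardinal.power_mul).symm
        _ ≤ μ := hμ ▸ Cardinal.le_powerlt l (Cardinal.mul_lt_of_lt hθinf hβθ hα)
  exact ⟨hmain, hμκ, hκμθ⟩
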